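/- The exponential generating function of the central Fubini-like numbers satisfies, as an identity of formal power series in ℝ[[t]]: (1 − 2·S(t)) · ∑_{n≥0} 𝔠_n·t^n/n! = 1, where S(t) := ∑_{m≥0} t^{2m+1}/(2^{2m+1}·(2m+1)!) is the formal power series of sinh(t/2); i.e., ∑_{n≥0} 𝔠_n·t^n/n! = 1/(1 − 2·sinh(t/2)). -/

import Mathlib

open Nat Finset

/-- Central factorial numbers of the second kind. -/
noncomputable def centralT (n k : ℕ) : ℝ :=
  (1 / (k ! : ℝ)) * ∑ j ∈ Finset.range (k + 1),
    (-1 : ℝ) ^ j * (k.choose j : ℝ) * ((k : ℝ) / 2 - (j : ℝ)) ^ n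

/-- Central Fubini-like polynomials. -/
noncomputable def centralFubini (n : ℕ) (x : ℝ) : ℝ :=
  ∑ k ∈ Finset.range (n + 1), (k ! : ℝ) * centralT n k * x ^ k

/-- Central Fubini-like numbers. -/
noncomputable def centralFubiniNum (n : ℕ) : ℝ := centralFubini n 1

/-- Formal power series of `sinh (t/2)`:  `∑_{m≥0} t^(2m+1)/(2^(2m+1)·(2m+1)!)`. -/
noncomputable def sinhHalf : PowerSeries ℝ :=
  PowerSeries.mk fun m => if m % 2 = 1 then 1 / (2 ^ m * (m ! : ℝ)) else 0

namespace CFaux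

open PowerSeries

/-- `E a = e^{a t}` as a formal power series. -/
noncomputable def E (a : ℝ) : PowerSeries ℝ := rescale a (exp ℝ)

lemma coeff_E (a : ℝ) (n : ℕ) : coeff n (E a) = a ^ n / n ! := by
  simp [E, coeff_rescale, coeff_exp, div_eq_mul_inv, mul_comm]

lemma E_mul (a b : ℝ) : E a * E b = E (a + b) := exp_mul_exp_eq_exp_add a b

lemma E_pow (a : ℝ) (m : ℕ) : E a ^ m = E ((m : ℝ) * a) := by
  induction m with
  | zero => simp [E, rescale_zero, constantCoeff_exp]
  | succ m ih =>
    rw [pow_succ, ih, E_mul]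
    norm_num
    ring_nf

lemma S_eq : PowerSeries.C (R := ℝ) 2 * sinhHalf = E (1/2) - E (-(1/2)) := by
  ext m
  simp only [map_sub, coeff_E, sinhHalf, PowerSeries.coeff_C_mul, coeff_mk]
  rcases Nat.even_or_odd m with he | ho
  · have h2 : m % 2 = 0 := Nat.even_iff.mp he
    rw [he.neg_pow]
    simp [h2]
  · have h2 : m % 2 = 1 := Nat.odd_iff.mp ho
    rw [ho.neg_pow]
    simp only [h2, if_true]
    have hm : (m ! : ℝ) ≠ 0 := Nat.cast_ne_zero.mpr m.factorial_ne_zero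
    field_simp
    rw [← mul_pow]; norm_num

lemma constantCoeff_S : PowerSeries.constantCoeff (PowerSeries.C (R := ℝ) 2 * sinhHalf) = 0 := by
  simp [sinhHalf, ← PowerSeries.coeff_zero_eq_constantCoeff_apply]

lemma coeff_S_pow (k n : ℕ) :
    coeff n ((PowerSeries.C (R := ℝ) 2 * sinhHalf) ^ k) =
      (∑ j ∈ Finset.range (k + 1),
        (-1 : ℝ) ^ j * (k.choose j : ℝ) * ((k : ℝ) / 2 - (j : ℝ)) ^ n) / n ! := by
  rw [S_eq]
  have : (E (1/2) - E (-(1/2))) ^ k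
      = ∑ j ∈ Finset.range (k + 1), PowerSeries.C ((-1 : ℝ) ^ j * (k.choose j : ℝ))
          * E ((k : ℝ)/2 - j) := by
    have hb : E (1/2) - E (-(1/2)) = (-E (-(1/2))) + E (1/2) := by ring
    rw [hb, add_pow]
    refine Finset.sum_congr rfl fun j hj => ?_
    have hjk : j ≤ k := Nat.lt_succ_iff.mp (Finset.mem_range.mp hj)
    calc (-E (-(1/2))) ^ j * E (1/2) ^ (k - j) * ((k.choose j : ℕ) : PowerSeries ℝ)
        = ((-1 : PowerSeries ℝ) ^ j * ((k.choose j : ℕ) : PowerSeries ℝ)) *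
            (E (-(1/2)) ^ j * E (1/2) ^ (k - j)) := by ring
      _ = PowerSeries.C ((-1 : ℝ) ^ j * (k.choose j : ℝ)) * E ((k : ℝ)/2 - j) := by
          rw [E_pow, E_pow, E_mul]
          congr 1
          · simp [map_mul, map_pow, map_natCast]
          · rw [Nat.cast_sub hjk]
            ring_nf
  rw [this, map_sum, Finset.sum_div]
  refine Finset.sum_congr rfl fun j _ => ?_
  rw [PowerSeries.coeff_C_mul, coeff_E]
  ring

lemma coeff_S_pow_eq_zero {k n : ℕ} (h : n < k) :
    coeff n ((PowerSeries.C (R := ℝ) 2 * sinhHalf) ^ k) = 0 := by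
  set S := PowerSeries.C (R := ℝ) 2 * sinhHalf
  have hord : ∀ k : ℕ, (k : ℕ∞) ≤ (S ^ k).order := by
    intro k
    induction k with
    | zero => simp
    | succ k ih =>
      have h1 : (1 : ℕ∞) ≤ S.order := by
        apply PowerSeries.nat_le_order
        intro i hi
        interval_cases i
        rw [PowerSeries.coeff_zero_eq_constantCoeff_apply]
        exact constantCoeff_S
      calc ((k + 1 : ℕ) : ℕ∞) = (k : ℕ∞) + 1 := by push_cast; ring
        _ ≤ (S ^ k).order + S.order := add_le_add ih h1
        _ ≤ (S ^ k * S).order := PowerSeries.le_order_mul _ _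
        _ = (S ^ (k+1)).order := by rw [← pow_succ]
  exact PowerSeries.coeff_of_lt_order n (lt_of_lt_of_le (by exact_mod_cast h) (hord k))

lemma coeff_F (n : ℕ) :
    centralFubiniNum n / (n ! : ℝ) =
      ∑ k ∈ Finset.range (n + 1), coeff n ((PowerSeries.C (R := ℝ) 2 * sinhHalf) ^ k) := by
  unfold centralFubiniNum centralFubini centralT
  rw [Finset.sum_div]
  refine Finset.sum_congr rfl fun k _ => ?_
  rw [coeff_S_pow]
  have hk : (k ! : ℝ) ≠ 0 := Nat.cast_ne_zero.mpr k.factorial_ne_zero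
  field_simp
  simp

end CFaux

theorem central_fubini_num_egf :
    (1 - PowerSeries.C (R := ℝ) 2 * sinhHalf) *
      PowerSeries.mk (fun n => centralFubiniNum n / (n ! : ℝ)) = 1 := by
  set S := PowerSeries.C (R := ℝ) 2 * sinhHalf with hS
  ext n
  rw [PowerSeries.coeff_mul]
  have key : ∀ q ≤ n, PowerSeries.coeff q (PowerSeries.mk (fun n => centralFubiniNum n / (n ! : ℝ)))
      = PowerSeries.coeff q (∑ k ∈ Finset.range (n + 1), S ^ k) := by
    intro q hq
    rw [PowerSeries.coeff_mk, CFaux.coeff_F, map_sum, ← hS]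
    refine Finset.sum_subset (Finset.range_subset_range.mpr (Nat.succ_le_succ hq)) fun k hk1 hk2 => ?_
    rw [hS]
    refine CFaux.coeff_S_pow_eq_zero ?_
    simp only [Finset.mem_range] at hk1 hk2
    omega
  have hmain : ∑ p ∈ antidiagonal n,
        PowerSeries.coeff p.1 (1 - S) *
          PowerSeries.coeff p.2 (PowerSeries.mk (fun n => centralFubiniNum n / (n ! : ℝ)))
      = PowerSeries.coeff n ((1 - S) * ∑ k ∈ Finset.range (n + 1), S ^ k) := by
    rw [PowerSeries.coeff_mul]
    refine Finset.sum_congr rfl fun p hp => ?_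
    rw [key p.2 (Finset.HasAntidiagonal.antidiagonal.snd_le hp)]
  rw [hmain]
  have hgeo : (1 - S) * ∑ k ∈ Finset.range (n + 1), S ^ k = 1 - S ^ (n + 1) := by
    have := geom_sum_mul S (n + 1)
    linear_combination -this
  rw [hgeo, map_sub, hS, CFaux.coeff_S_pow_eq_zero (Nat.lt_succ_self n), sub_zero]
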